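/- arXiv:2605.09651 — 2 statements merged into one kernel-verified Lean document; each statement's English description precedes it below -/
import Mathlib

section
/- For fixed total S = s_1 + ... + s_k over positive reals s_a, the sum of squares s_1^2 + ... + s_k^2 is at least S^2/k, with equality iff all s_a = S/k; consequently the joint minimization of (R_2 + sum s_a^2)/((R_1 + sum s_a)^2) over positive s_1,...,s_k reduces to the equal-amplitude case, and the global minimum equals Q_0/(1 + k Q_0), attained exactly when all s_a = R_2/R_1. -/
theorem stmt8 (k : ℕ) (hk : 1 ≤ k) (s : Fin k → ℝ) (hs : ∀ a, 0 < s a)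
    (S : ℝ) (hS : S = ∑ a, s a)
    (R1 R2 : ℝ) (hR1 : 0 < R1) (hR2 : 0 < R2)
    (Q0 : ℝ) (hQ0 : Q0 = R2 / R1 ^ 2) :
    (S ^ 2 / k ≤ ∑ a, (s a) ^ 2 ∧
      (∑ a, (s a) ^ 2 = S ^ 2 / k ↔ ∀ a, s a = S / k)) ∧
    (Q0 / (1 + k * Q0) ≤ (R2 + ∑ a, (s a) ^ 2) / (R1 + ∑ a, s a) ^ 2 ∧
      ((R2 + ∑ a, (s a) ^ 2) / (R1 + ∑ a, s a) ^ 2 = Q0 / (1 + k * Q0) ↔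
        ∀ a, s a = R2 / R1)) := by
  have hk' : (0:ℝ) < (k:ℝ) := by exact_mod_cast Nat.lt_of_lt_of_le Nat.zero_lt_one hk
  rw [← hS]
  set T : ℝ := ∑ a, (s a) ^ 2 with hT
  clear_value T
  have hSpos : 0 < S := by
    rw [hS]
    exact Finset.sum_pos (fun a _ => hs a)
      (Finset.univ_nonempty_iff.mpr ⟨⟨0, Nat.lt_of_lt_of_le Nat.zero_lt_one hk⟩⟩)
  have hkey : ∑ a, (s a - S / k) ^ 2 = T - S ^ 2 / k := by
    rw [hT]
    have hc : ∀ a : Fin k, (s a - S / k) ^ 2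
        = (s a) ^ 2 - (2 * (S / k)) * s a + (S / k) ^ 2 := by intro a; ring
    rw [Finset.sum_congr rfl (fun a _ => hc a)]
    rw [Finset.sum_add_distrib, Finset.sum_sub_distrib, ← Finset.mul_sum, ← hS,
      Finset.sum_const, Finset.card_univ, Fintype.card_fin, nsmul_eq_mul]
    field_simp
    ring
  have hsumsq : 0 ≤ ∑ a, (s a - S / k) ^ 2 :=
    Finset.sum_nonneg fun a _ => sq_nonneg _
  have h1 : S ^ 2 / k ≤ T := by linarith [hkey ▸ hsumsq]
  have h2 : T = S ^ 2 / k ↔ ∀ a, s a = S / k := by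
    constructor
    · intro h
      have hz : ∑ a, (s a - S / k) ^ 2 = 0 := by rw [hkey, h]; ring
      have hall := (Finset.sum_eq_zero_iff_of_nonneg
        (fun a _ => sq_nonneg (s a - S / k))).mp hz
      intro a
      have := hall a (Finset.mem_univ a)
      have := pow_eq_zero_iff (n := 2) (by norm_num) |>.mp this
      linarith
    · intro h
      have he : T = ∑ a : Fin k, (S / k) ^ 2 := by
        rw [hT]; exact Finset.sum_congr rfl (fun a _ => by rw [h a])
      rw [he, Finset.sum_const, Finset.card_univ, Fintype.card_fin, nsmul_eq_mul]
      field_simp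
  have hden : (0:ℝ) < R1 ^ 2 + k * R2 := by positivity
  have hq : Q0 / (1 + k * Q0) = R2 / (R1 ^ 2 + k * R2) := by
    rw [hQ0, div_eq_div_iff (by positivity) (ne_of_gt hden)]
    field_simp
  have hRS : (0:ℝ) < (R1 + S) ^ 2 := pow_pos (by linarith) 2
  have hTk : S ^ 2 ≤ T * k := by
    have := mul_le_mul_of_nonneg_right h1 (le_of_lt hk')
    rw [div_mul_cancel₀ _ (ne_of_gt hk')] at this
    linarith
  refine ⟨⟨h1, h2⟩, ?_, ?_⟩
  · rw [hq, div_le_div_iff₀ hden hRS]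
    have hA : 0 ≤ (T * k - S ^ 2) * (R1 ^ 2 + k * R2) :=
      mul_nonneg (by linarith) (le_of_lt hden)
    nlinarith [hA, sq_nonneg ((k:ℝ) * R2 - S * R1), hk']
  · rw [hq]
    constructor
    · intro h
      have hE : (R2 + T) * (R1 ^ 2 + k * R2) = R2 * (R1 + S) ^ 2 := by
        have := (div_eq_div_iff (ne_of_gt hRS) (ne_of_gt hden)).mp h
        linarith
      have hzero : (k:ℝ) * (T * k - S ^ 2) * (R1 ^ 2 + k * R2)
          + (k:ℝ) * ((k:ℝ) * R2 - S * R1) ^ 2 = 0 := by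
        have hid : (k:ℝ) * (T * k - S ^ 2) * (R1 ^ 2 + k * R2)
            + (k:ℝ) * ((k:ℝ) * R2 - S * R1) ^ 2
            = (k:ℝ) ^ 2 * ((R2 + T) * (R1 ^ 2 + k * R2) - R2 * (R1 + S) ^ 2) := by
          ring
        rw [hid, hE]; ring
      have hn1 : 0 ≤ (k:ℝ) * (T * k - S ^ 2) * (R1 ^ 2 + k * R2) := by
        have h' : 0 ≤ T * k - S ^ 2 := by linarith
        positivity
      have hz2 : ((k:ℝ) * R2 - S * R1) ^ 2 = 0 := by
        nlinarith [sq_nonneg ((k:ℝ) * R2 - S * R1), hk']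
      have hz1 : (k:ℝ) * (T * k - S ^ 2) * (R1 ^ 2 + k * R2) = 0 := by
        rw [hz2] at hzero; linarith
      have hTeq : T = S ^ 2 / k := by
        have h' : T * k - S ^ 2 = 0 := by
          rcases mul_eq_zero.mp hz1 with h'' | h''
          · rcases mul_eq_zero.mp h'' with h3 | h3
            · exact absurd h3 (ne_of_gt hk')
            · exact h3
          · exact absurd h'' (ne_of_gt hden)
        field_simp
        linarith
      have hall := h2.mp hTeq
      have hSR : S * R1 = (k:ℝ) * R2 := by
        have := pow_eq_zero_iff (n := 2) (by norm_num) |>.mp hz2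
        linarith
      intro a
      rw [hall a, div_eq_div_iff (ne_of_gt hk') (ne_of_gt hR1)]
      linarith
    · intro h
      have hSv : S = (k:ℝ) * (R2 / R1) := by
        rw [hS, Finset.sum_congr rfl (fun a _ => h a), Finset.sum_const,
          Finset.card_univ, Fintype.card_fin, nsmul_eq_mul]
      have hTv : T = (k:ℝ) * (R2 / R1) ^ 2 := by
        rw [hT]
        rw [Finset.sum_congr rfl (fun (a : Fin k) _ => by rw [h a] :
          ∀ a ∈ Finset.univ, (s a) ^ 2 = (R2 / R1) ^ 2)]
        rw [Finset.sum_const, Finset.card_univ, Fintype.card_fin, nsmul_eq_mul]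
      rw [div_eq_div_iff (ne_of_gt hRS) (ne_of_gt hden), hSv, hTv]
      field_simp
end

section
/- For the one-particle extension with new amplitude share p_X = r/(R_1 + r), the extended Koide ratio satisfies the exact identity Q = p_X^2 + Q_0 (1 - p_X)^2 = Q_min + (p_X - Q_min)^2/(1 - Q_min), where Q_min = Q_0/(1 + Q_0); in particular Q is exactly quadratic in p_X with unique minimum at p_X = Q_min. -/
theorem stmt13 (R1 R2 : ℝ) (hR1 : 0 < R1) (hR2 : 0 < R2)
    (Q0 : ℝ) (hQ0 : Q0 = R2 / R1 ^ 2) (hQ0pos : 0 < Q0) (hQ0le : Q0 ≤ 1)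
    (Qmin : ℝ) (hQmin : Qmin = Q0 / (1 + Q0))
    (r : ℝ) (hr : 0 < r)
    (pX Q : ℝ) (hpX : pX = r / (R1 + r)) (hQ : Q = (R2 + r ^ 2) / (R1 + r) ^ 2) :
    Q = pX ^ 2 + Q0 * (1 - pX) ^ 2 ∧
      Q = Qmin + (pX - Qmin) ^ 2 / (1 - Qmin) ∧
      Qmin ^ 2 + Q0 * (1 - Qmin) ^ 2 = Qmin ∧
      ∀ p : ℝ, p ≠ Qmin → Qmin < p ^ 2 + Q0 * (1 - p) ^ 2 := by
  have hRr : (0:ℝ) < R1 + r := by linarith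
  have hRr' : R1 + r ≠ 0 := ne_of_gt hRr
  have h1Q : (0:ℝ) < 1 + Q0 := by linarith
  have h1Q' : (1:ℝ) + Q0 ≠ 0 := ne_of_gt h1Q
  have hR1' : R1 ≠ 0 := ne_of_gt hR1
  have hR2eq : R2 = Q0 * R1 ^ 2 := by
    field_simp at hQ0; linarith
  have e1 : Q = pX ^ 2 + Q0 * (1 - pX) ^ 2 := by
    subst hQ hpX hR2eq; field_simp; ring
  have hQminlt : Qmin < 1 := by
    rw [hQmin, div_lt_one h1Q]; linarith
  have h1m : (1:ℝ) - Qmin ≠ 0 := by linarith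
  have e3 : Qmin ^ 2 + Q0 * (1 - Qmin) ^ 2 = Qmin := by
    subst hQmin; field_simp; ring
  refine ⟨e1, ?_, e3, ?_⟩
  · rw [e1, hQmin]; rw [hQmin] at h1m; field_simp; ring
  · intro p hp
    have key : p ^ 2 + Q0 * (1 - p) ^ 2 - Qmin = (1 + Q0) * (p - Qmin) ^ 2 := by
      subst hQmin; field_simp; ring
    have hpne : p - Qmin ≠ 0 := sub_ne_zero.mpr hp
    have hpos : 0 < (1 + Q0) * (p - Qmin) ^ 2 :=
      mul_pos h1Q (by positivity)
    linarith
end
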